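/- For every α ∈ ℝ and every δ ∈ (0, π) there exists a constant C > 0 such that for all real x, y with w = x + iy ≠ 0 and |arg w| ≤ π − δ/2 (principal argument), and for all ε ≥ (4/3)·sin(δ/2): ∫_x^∞ e^{−εt} · (1 + |t + iy|)^{−2α/3} · |t + iy|^{−1/3} dt ≤ C · e^{−εx} · (1 + |w|)^{−(2α+1)/3}. -/

import Mathlib

open Complex Real MeasureTheory

lemma aux_poly_le_exp (b e : ℝ) (hb : 0 ≤ b) (he : 0 < e) :
    ∃ M > 0, ∀ u : ℝ, 0 ≤ u → (1 + u) ^ b ≤ M * Real.exp (e * u) := by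
  rcases eq_or_lt_of_le hb with hb0 | hb0
  · exact ⟨1, one_pos, fun u hu => by
      rw [← hb0, Real.rpow_zero, one_mul]
      exact Real.one_le_exp (by positivity)⟩
  · refine ⟨Real.exp (e - b + b * Real.log (b / e)), Real.exp_pos _, fun u hu => ?_⟩
    have h1u : (0:ℝ) < 1 + u := by linarith
    have hK : (0:ℝ) < b / e := div_pos hb0 he
    rw [← Real.exp_add, Real.rpow_def_of_pos h1u]
    apply Real.exp_le_exp.2
    have hlog : Real.log ((1 + u) / (b / e)) ≤ (1 + u) / (b / e) - 1 :=
      Real.log_le_sub_one_of_pos (by positivity)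
    rw [Real.log_div (by positivity) (ne_of_gt hK)] at hlog
    have h2 : Real.log (1 + u) * b ≤ ((1 + u) / (b / e) - 1 + Real.log (b / e)) * b :=
      mul_le_mul_of_nonneg_right (by linarith) hb
    have h3 : ((1 + u) / (b / e) - 1 + Real.log (b / e)) * b
        = e * (1 + u) - b + b * Real.log (b / e) := by
      field_simp
    rw [h3] at h2
    linarith

lemma aux_abs_im (t y : ℝ) : |y| ≤ ‖(t : ℂ) + (y : ℂ) * Complex.I‖ := by
  simpa using Complex.abs_im_le_norm ((t : ℂ) + (y : ℂ) * Complex.I)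

lemma aux_abs_re (t y : ℝ) : |t| ≤ ‖(t : ℂ) + (y : ℂ) * Complex.I‖ := by
  simpa using Complex.abs_re_le_norm ((t : ℂ) + (y : ℂ) * Complex.I)

lemma aux_abs_mono (x t y : ℝ) (hx : 0 ≤ x) (hxt : x ≤ t) :
    ‖(x : ℂ) + (y : ℂ) * Complex.I‖ ≤ ‖(t : ℂ) + (y : ℂ) * Complex.I‖ := by
  rw [Complex.norm_add_mul_I, Complex.norm_add_mul_I]
  apply Real.sqrt_le_sqrt
  nlinarith

lemma aux_abs_up (x t y : ℝ) (hxt : x ≤ t) :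
    ‖(t : ℂ) + (y : ℂ) * Complex.I‖
      ≤ ‖(x : ℂ) + (y : ℂ) * Complex.I‖ + (t - x) := by
  have h : (t : ℂ) + (y : ℂ) * Complex.I
      = ((x : ℂ) + (y : ℂ) * Complex.I) + (((t - x : ℝ)) : ℂ) := by
    push_cast; ring
  rw [h]
  refine le_trans (norm_add_le _ _) ?_
  rw [Complex.norm_real, Real.norm_eq_abs, _root_.abs_of_nonneg (sub_nonneg.2 hxt)]

lemma aux_arg (δ x y : ℝ) (hδ0 : 0 < δ) (hδπ : δ < π)
    (hz : (x : ℂ) + (y : ℂ) * Complex.I ≠ 0)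
    (harg : |Complex.arg ((x : ℂ) + (y : ℂ) * Complex.I)| ≤ π - δ/2) (hx : x < 0) :
    Real.sin (δ/2) * ‖(x : ℂ) + (y : ℂ) * Complex.I‖ ≤ |y| := by
  set z : ℂ := (x : ℂ) + (y : ℂ) * Complex.I with hzdef
  have habs : 0 < ‖z‖ := norm_pos_iff.mpr hz
  have hre : z.re = x := by simp [hzdef]
  have him : z.im = y := by simp [hzdef]
  have h2 : π/2 ≤ |Complex.arg z| := by
    by_contra h
    push_neg at h
    rcases Complex.abs_arg_lt_pi_div_two_iff.1 h with h' | h'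
    · rw [hre] at h'; linarith
    · exact hz h'
  have hsin : Real.sin (δ/2) ≤ Real.sin |Complex.arg z| := by
    have hcos := Real.cos_le_cos_of_nonneg_of_le_pi
      (x := |Complex.arg z| - π/2) (y := π/2 - δ/2) (by linarith) (by linarith) (by linarith)
    rw [Real.cos_pi_div_two_sub] at hcos
    rwa [show |Complex.arg z| - π/2 = -(π/2 - |Complex.arg z|) by ring, Real.cos_neg,
      Real.cos_pi_div_two_sub] at hcos
  have hsin_abs : Real.sin |Complex.arg z| = |Real.sin (Complex.arg z)| := by
    rcases le_or_gt 0 (Complex.arg z) with h | h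
    · rw [_root_.abs_of_nonneg h,
        _root_.abs_of_nonneg (Real.sin_nonneg_of_nonneg_of_le_pi h (Complex.arg_le_pi z))]
    · have h0 : 0 ≤ Real.sin (-(Complex.arg z)) :=
        Real.sin_nonneg_of_nonneg_of_le_pi (by linarith) (by linarith [Complex.neg_pi_lt_arg z])
      rw [Real.sin_neg] at h0
      rw [_root_.abs_of_neg h, Real.sin_neg, _root_.abs_of_nonpos (by linarith)]
  have hsa := Complex.sin_arg z
  rw [him] at hsa
  have : Real.sin (δ/2) ≤ |y| / ‖z‖ := by
    rw [hsin_abs, hsa, abs_div, _root_.abs_of_pos habs] at hsin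
    exact hsin
  calc Real.sin (δ/2) * ‖z‖ ≤ (|y| / ‖z‖) * ‖z‖ :=
        mul_le_mul_of_nonneg_right this habs.le
    _ = |y| := div_mul_cancel₀ _ (ne_of_gt habs)

lemma aux_low (δ x y t : ℝ) (hδ0 : 0 < δ) (hδπ : δ < π)
    (hz : (x : ℂ) + (y : ℂ) * Complex.I ≠ 0)
    (harg : |Complex.arg ((x : ℂ) + (y : ℂ) * Complex.I)| ≤ π - δ/2) (hxt : x ≤ t) :
    Real.sin (δ/2) * ‖(x : ℂ) + (y : ℂ) * Complex.I‖
      ≤ ‖(t : ℂ) + (y : ℂ) * Complex.I‖ := by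
  rcases le_or_gt 0 x with hx | hx
  · have h1 : Real.sin (δ/2) ≤ 1 := Real.sin_le_one _
    calc Real.sin (δ/2) * ‖(x : ℂ) + (y : ℂ) * Complex.I‖
        ≤ 1 * ‖(x : ℂ) + (y : ℂ) * Complex.I‖ :=
          mul_le_mul_of_nonneg_right h1 (norm_nonneg _)
      _ = ‖(x : ℂ) + (y : ℂ) * Complex.I‖ := one_mul _
      _ ≤ ‖(t : ℂ) + (y : ℂ) * Complex.I‖ := aux_abs_mono x t y hx hxt
  · exact le_trans (aux_arg δ x y hδ0 hδπ hz harg hx) (aux_abs_im t y)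

lemma aux_int_exp_integrable (b x : ℝ) (hb : 0 < b) :
    MeasureTheory.IntegrableOn (fun t : ℝ => Real.exp (-(b * t))) (Set.Ici x) := by
  rw [integrableOn_Ici_iff_integrableOn_Ioi]
  simpa [neg_mul] using exp_neg_integrableOn_Ioi x hb

lemma aux_int_exp (b x : ℝ) (hb : 0 < b) :
    (∫ t in Set.Ici x, Real.exp (-(b * t))) = b⁻¹ * Real.exp (-(b * x)) := by
  rw [MeasureTheory.integral_Ici_eq_integral_Ioi]
  have h := integral_comp_mul_left_Ioi (fun u => Real.exp (-u)) x hb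
  simp only [smul_eq_mul] at h
  rw [h, integral_exp_neg_Ioi]

lemma aux_abs_rpow (t : ℝ) : |t| ^ (-(1:ℝ)/3) ≤ 2 * t ^ (-(1:ℝ)/3) := by
  rcases lt_trichotomy t 0 with h | h | h
  · rw [Real.rpow_def_of_neg h, _root_.abs_of_neg h,
      show Real.log t = Real.log (-t) from (Real.log_neg_eq_log t).symm,
      Real.rpow_def_of_pos (by linarith : (0:ℝ) < -t)]
    have hc : Real.cos (-(1:ℝ)/3 * π) = 1/2 := by
      rw [show (-(1:ℝ)/3 * π) = -(π/3) by ring, Real.cos_neg, Real.cos_pi_div_three]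
    rw [hc]
    ring_nf
    linarith
  · simp [h, Real.zero_rpow (show (-(1:ℝ)/3) ≠ 0 by norm_num)]
  · rw [_root_.abs_of_pos h]
    nlinarith [Real.rpow_nonneg h.le (-(1:ℝ)/3)]

lemma aux_phi_meas (b : ℝ) :
    Measurable fun t : ℝ => Real.exp (-(b * t)) * |t| ^ (-(1:ℝ)/3) := by
  apply Measurable.mul
  · exact Real.measurable_exp.comp ((measurable_const.mul measurable_id).neg)
  · apply measurable_of_continuousOn_compl_singleton (0 : ℝ)
    intro t ht
    have ht0 : t ≠ 0 := ht
    exact ((Real.continuousAt_rpow_const _ _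
      (Or.inl (abs_ne_zero.2 ht0))).comp continuous_abs.continuousAt).continuousWithinAt

lemma aux_phi_integrable (b : ℝ) (hb : 0 < b) :
    MeasureTheory.IntegrableOn (fun t : ℝ => Real.exp (-(b * t)) * |t| ^ (-(1:ℝ)/3))
      (Set.Ici (-1 : ℝ)) := by
  rw [integrableOn_Ici_iff_integrableOn_Ioi]
  rw [← Set.Ioc_union_Ioi_eq_Ioi (show (-1:ℝ) ≤ 1 by norm_num)]
  apply MeasureTheory.IntegrableOn.union
  · have hint : MeasureTheory.IntegrableOn (fun t : ℝ => t ^ (-(1:ℝ)/3)) (Set.Ioc (-1 : ℝ) 1) :=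
      (intervalIntegrable_iff_integrableOn_Ioc_of_le (by norm_num)).1
        (intervalIntegral.intervalIntegrable_rpow' (by norm_num))
    apply MeasureTheory.Integrable.mono' (hint.const_mul (2 * Real.exp b))
      (aux_phi_meas b).aestronglyMeasurable.restrict
    filter_upwards [MeasureTheory.ae_restrict_mem measurableSet_Ioc] with t ht
    have h1 : Real.exp (-(b * t)) ≤ Real.exp b := by
      apply Real.exp_le_exp.2
      nlinarith [ht.1]
    have h2 : |t| ^ (-(1:ℝ)/3) ≤ 2 * t ^ (-(1:ℝ)/3) := aux_abs_rpow t
    have h3 : (0:ℝ) ≤ |t| ^ (-(1:ℝ)/3) := Real.rpow_nonneg (abs_nonneg t) _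
    rw [Real.norm_eq_abs, _root_.abs_of_nonneg (by positivity)]
    calc Real.exp (-(b * t)) * |t| ^ (-(1:ℝ)/3) ≤ Real.exp b * (2 * t ^ (-(1:ℝ)/3)) := by
          apply mul_le_mul h1 h2 h3 (Real.exp_pos _).le
      _ = 2 * Real.exp b * t ^ (-(1:ℝ)/3) := by ring
  · have hgint : MeasureTheory.IntegrableOn (fun t : ℝ => Real.exp (-(b * t)))
        (Set.Ioi (1:ℝ)) := by
      simpa [neg_mul] using exp_neg_integrableOn_Ioi 1 hb
    apply MeasureTheory.Integrable.mono' hgint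
      (aux_phi_meas b).aestronglyMeasurable.restrict
    filter_upwards [MeasureTheory.ae_restrict_mem measurableSet_Ioi] with t ht
    have ht1 : (1:ℝ) ≤ t := le_of_lt ht
    have h2 : |t| ^ (-(1:ℝ)/3) ≤ 1 :=
      Real.rpow_le_one_of_one_le_of_nonpos (by rw [_root_.abs_of_pos (by linarith)]; exact ht1)
        (by norm_num)
    rw [Real.norm_eq_abs, _root_.abs_of_nonneg (by positivity)]
    calc Real.exp (-(b * t)) * |t| ^ (-(1:ℝ)/3) ≤ Real.exp (-(b * t)) * 1 :=
          mul_le_mul_of_nonneg_left h2 (Real.exp_pos _).le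
      _ = Real.exp (-(b * t)) := mul_one _

set_option maxHeartbeats 1600000 in
theorem stmt14 (α δ : ℝ) (hδ : δ ∈ Set.Ioo 0 π) :
    ∃ C > 0, ∀ x y ε : ℝ, (x : ℂ) + (y : ℂ) * Complex.I ≠ 0 →
      |Complex.arg ((x : ℂ) + (y : ℂ) * Complex.I)| ≤ π - δ/2 →
      (4/3 : ℝ) * Real.sin (δ/2) ≤ ε →
      (∫ t in Set.Ici x,
          Real.exp (-ε * t) *
            (1 + ‖(t : ℂ) + (y : ℂ) * Complex.I‖) ^ (-(2*α)/3) *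
            (‖(t : ℂ) + (y : ℂ) * Complex.I‖) ^ (-(1 : ℝ)/3)) ≤
        C * Real.exp (-ε * x) *
          (1 + ‖(x : ℂ) + (y : ℂ) * Complex.I‖) ^ (-(2*α + 1)/3) := by
  obtain ⟨hδ0, hδπ⟩ := hδ
  have hc : 0 < Real.sin (δ/2) := Real.sin_pos_of_pos_of_lt_pi (by linarith) (by linarith)
  have hc1 : Real.sin (δ/2) ≤ 1 := Real.sin_le_one _
  set c : ℝ := Real.sin (δ/2) with hc_def
  set ε₀ : ℝ := 4/3 * c with hε₀_def
  have hε₀ : 0 < ε₀ := by rw [hε₀_def]; linarith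
  set b0 : ℝ := ε₀ / 2 with hb0_def
  have hb0 : 0 < b0 := by rw [hb0_def]; linarith
  set β : ℝ := -(2*α)/3 with hβ_def
  set bb : ℝ := max β 0 with hbb_def
  have hbb0 : 0 ≤ bb := le_max_right _ _
  obtain ⟨M, hM0, hM⟩ := aux_poly_le_exp bb b0 hbb0 hb0
  set Kb : ℝ := c ^ (-|β|) with hKb_def
  have hKb0 : 0 < Kb := Real.rpow_pos_of_pos hc _
  have hKb1 : 1 ≤ Kb :=
    Real.one_le_rpow_of_pos_of_le_one_of_nonpos hc hc1 (neg_nonpos.2 (abs_nonneg _))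
  set e : ℝ := -(2*α + 1)/3 with he_def
  set C3 : ℝ := ∫ t in Set.Ici (-1:ℝ), Real.exp (-(b0 * t)) * |t| ^ (-(1:ℝ)/3) with hC3_def
  have hC3 : 0 ≤ C3 := by
    rw [hC3_def]
    exact MeasureTheory.setIntegral_nonneg measurableSet_Ici fun t _ =>
      mul_nonneg (Real.exp_pos _).le (Real.rpow_nonneg (abs_nonneg t) _)
  have hc2 : 0 < c/2 := by linarith
  have hr1 : 0 < (c/2) ^ (-(1:ℝ)/3) := Real.rpow_pos_of_pos hc2 _
  set K1 : ℝ := Kb * M * (c/2) ^ (-(1:ℝ)/3) * b0⁻¹ with hK1_def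
  have hK1 : 0 < K1 := mul_pos (mul_pos (mul_pos hKb0 hM0) hr1) (inv_pos.2 hb0)
  have h2bb : (0:ℝ) < 2 ^ bb := Real.rpow_pos_of_pos (by norm_num) _
  have h2e : (0:ℝ) < (2:ℝ) ^ |e| := Real.rpow_pos_of_pos (by norm_num) _
  set K2 : ℝ := Kb * M * 2 ^ bb * Real.exp b0 * C3 * 2 ^ |e| with hK2_def
  have hK2 : 0 ≤ K2 :=
    mul_nonneg (mul_nonneg (mul_nonneg (mul_nonneg (mul_nonneg hKb0.le hM0.le) h2bb.le)
      (Real.exp_pos _).le) hC3) h2e.le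
  refine ⟨1 + K1 + K2, by linarith, fun x y ε hz harg hε => ?_⟩
  have hε₀ε : ε₀ ≤ ε := by rw [hε₀_def]; exact hε
  set w : ℂ := (x:ℂ) + (y:ℂ) * Complex.I with hw_def
  set A : ℝ := ‖w‖ with hA_def
  have hA0 : 0 < A := norm_pos_iff.mpr hz
  have hA0' : (0:ℝ) < 1 + A := by linarith
  have hz' : (x:ℂ) + (y:ℂ) * Complex.I ≠ 0 := by rw [← hw_def]; exact hz
  have harg' : |Complex.arg ((x:ℂ) + (y:ℂ) * Complex.I)| ≤ π - δ/2 := by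
    rw [← hw_def]; exact harg
  have hAt : ∀ t : ℝ, (0:ℝ) ≤ ‖(t:ℂ) + (y:ℂ) * Complex.I‖ :=
    fun t => norm_nonneg _
  have hr0 : ∀ t : ℝ, (0:ℝ) ≤ ‖(t:ℂ) + (y:ℂ) * Complex.I‖ ^ (-(1:ℝ)/3) :=
    fun t => Real.rpow_nonneg (hAt t) _
  have hlow : ∀ t : ℝ, x ≤ t → c * A ≤ ‖(t:ℂ) + (y:ℂ) * Complex.I‖ := by
    intro t ht
    rw [hA_def, hw_def, hc_def]
    exact aux_low δ x y t hδ0 hδπ hz' harg' ht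
  have hup : ∀ t : ℝ, x ≤ t → ‖(t:ℂ) + (y:ℂ) * Complex.I‖ ≤ A + (t - x) := by
    intro t ht
    rw [hA_def, hw_def]
    exact aux_abs_up x t y ht
  have hB : ∀ t : ℝ, x ≤ t →
      (1 + ‖(t:ℂ) + (y:ℂ) * Complex.I‖) ^ β
        ≤ Kb * (1 + A) ^ β * (1 + (t - x)) ^ bb := by
    intro t ht
    rcases le_or_gt 0 β with hβ | hβ
    · have hbbeq : bb = β := max_eq_left hβ
      have h1 : 1 + ‖(t:ℂ) + (y:ℂ) * Complex.I‖ ≤ (1 + A) * (1 + (t - x)) := by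
        nlinarith [hup t ht, hA0, ht]
      calc (1 + ‖(t:ℂ) + (y:ℂ) * Complex.I‖) ^ β
          ≤ ((1 + A) * (1 + (t - x))) ^ β :=
            Real.rpow_le_rpow (by linarith [hAt t]) h1 hβ
        _ = (1 + A) ^ β * (1 + (t - x)) ^ β :=
            Real.mul_rpow (by linarith) (by linarith)
        _ ≤ Kb * ((1 + A) ^ β * (1 + (t - x)) ^ β) :=
            le_mul_of_one_le_left
              (mul_nonneg (Real.rpow_nonneg (by linarith) _) (Real.rpow_nonneg (by linarith) _))
              hKb1
        _ = Kb * (1 + A) ^ β * (1 + (t - x)) ^ bb := by rw [hbbeq]; ring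
    · have hbbeq : bb = 0 := max_eq_right hβ.le
      have h1 : c * (1 + A) ≤ 1 + ‖(t:ℂ) + (y:ℂ) * Complex.I‖ := by
        nlinarith [hlow t ht, hAt t, hc1, hc, hA0]
      have h2 := Real.rpow_le_rpow_of_nonpos (mul_pos hc hA0') h1 hβ.le
      have h3 : (c * (1 + A)) ^ β = c ^ β * (1 + A) ^ β :=
        Real.mul_rpow hc.le (by linarith)
      have h4 : c ^ β = Kb := by rw [hKb_def, _root_.abs_of_neg hβ, neg_neg]
      rw [hbbeq, Real.rpow_zero, mul_one, ← h4, ← h3]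
      exact h2
  have hE : ∀ t : ℝ, x ≤ t →
      Real.exp (-ε * t) ≤ Real.exp (-ε * x) * Real.exp (-(ε₀ * (t - x))) := by
    intro t ht
    rw [← Real.exp_add]
    apply Real.exp_le_exp.2
    nlinarith [mul_le_mul_of_nonneg_right hε₀ε (sub_nonneg.2 ht)]
  have hPE : ∀ t : ℝ, x ≤ t →
      (1 + (t - x)) ^ bb * Real.exp (-(ε₀ * (t - x))) ≤ M * Real.exp (-(b0 * (t - x))) := by
    intro t ht
    have h1 := hM (t - x) (sub_nonneg.2 ht)
    calc (1 + (t - x)) ^ bb * Real.exp (-(ε₀ * (t - x)))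
        ≤ (M * Real.exp (b0 * (t - x))) * Real.exp (-(ε₀ * (t - x))) :=
          mul_le_mul_of_nonneg_right h1 (Real.exp_pos _).le
      _ = M * Real.exp (b0 * (t - x) + -(ε₀ * (t - x))) := by rw [mul_assoc, ← Real.exp_add]
      _ = M * Real.exp (-(b0 * (t - x))) := by
          congr 1
          rw [hb0_def]
          ring
  have hMaster : ∀ t : ℝ, x ≤ t →
      Real.exp (-ε * t) * (1 + ‖(t:ℂ) + (y:ℂ) * Complex.I‖) ^ β *
          ‖(t:ℂ) + (y:ℂ) * Complex.I‖ ^ (-(1:ℝ)/3)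
        ≤ (Kb * M * Real.exp (-ε * x) * (1 + A) ^ β) *
            (Real.exp (-(b0 * (t - x))) *
              ‖(t:ℂ) + (y:ℂ) * Complex.I‖ ^ (-(1:ℝ)/3)) := by
    intro t ht
    have hBnn : (0:ℝ) ≤ (1 + ‖(t:ℂ) + (y:ℂ) * Complex.I‖) ^ β :=
      Real.rpow_nonneg (by linarith [hAt t]) _
    have step1 : Real.exp (-ε * t) * (1 + ‖(t:ℂ) + (y:ℂ) * Complex.I‖) ^ β
        ≤ (Real.exp (-ε * x) * Real.exp (-(ε₀ * (t - x)))) *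
            (Kb * (1 + A) ^ β * (1 + (t - x)) ^ bb) :=
      mul_le_mul (hE t ht) (hB t ht) hBnn (by positivity)
    have hKnn : (0:ℝ) ≤ Kb * Real.exp (-ε * x) * (1 + A) ^ β :=
      mul_nonneg (mul_nonneg hKb0.le (Real.exp_pos _).le) (Real.rpow_nonneg (by linarith) _)
    calc Real.exp (-ε * t) * (1 + ‖(t:ℂ) + (y:ℂ) * Complex.I‖) ^ β *
          ‖(t:ℂ) + (y:ℂ) * Complex.I‖ ^ (-(1:ℝ)/3)
        ≤ ((Real.exp (-ε * x) * Real.exp (-(ε₀ * (t - x)))) *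
            (Kb * (1 + A) ^ β * (1 + (t - x)) ^ bb)) *
            ‖(t:ℂ) + (y:ℂ) * Complex.I‖ ^ (-(1:ℝ)/3) :=
          mul_le_mul_of_nonneg_right step1 (hr0 t)
      _ = (Kb * Real.exp (-ε * x) * (1 + A) ^ β) *
            (((1 + (t - x)) ^ bb * Real.exp (-(ε₀ * (t - x)))) *
              ‖(t:ℂ) + (y:ℂ) * Complex.I‖ ^ (-(1:ℝ)/3)) := by ring
      _ ≤ (Kb * Real.exp (-ε * x) * (1 + A) ^ β) *
            ((M * Real.exp (-(b0 * (t - x)))) *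
              ‖(t:ℂ) + (y:ℂ) * Complex.I‖ ^ (-(1:ℝ)/3)) :=
          mul_le_mul_of_nonneg_left
            (mul_le_mul_of_nonneg_right (hPE t ht) (hr0 t)) hKnn
      _ = (Kb * M * Real.exp (-ε * x) * (1 + A) ^ β) *
            (Real.exp (-(b0 * (t - x))) *
              ‖(t:ℂ) + (y:ℂ) * Complex.I‖ ^ (-(1:ℝ)/3)) := by ring
  have hnn : 0 ≤ᵐ[MeasureTheory.volume.restrict (Set.Ici x)] fun t : ℝ =>
      Real.exp (-ε * t) * (1 + ‖(t:ℂ) + (y:ℂ) * Complex.I‖) ^ β *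
        ‖(t:ℂ) + (y:ℂ) * Complex.I‖ ^ (-(1:ℝ)/3) :=
    Filter.Eventually.of_forall fun t =>
      mul_nonneg (mul_nonneg (Real.exp_pos _).le
        (Real.rpow_nonneg (by linarith [hAt t]) _)) (hr0 t)
  rcases le_or_gt 1 A with hA1 | hA1
  · -- |w| ≥ 1
    have hlow2 : ∀ t : ℝ, x ≤ t →
        (c/2) * (1 + A) ≤ ‖(t:ℂ) + (y:ℂ) * Complex.I‖ := by
      intro t ht
      nlinarith [hlow t ht, hc]
    have hAtr : ∀ t : ℝ, x ≤ t →
        ‖(t:ℂ) + (y:ℂ) * Complex.I‖ ^ (-(1:ℝ)/3)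
          ≤ (c/2) ^ (-(1:ℝ)/3) * (1 + A) ^ (-(1:ℝ)/3) := by
      intro t ht
      have h := Real.rpow_le_rpow_of_nonpos (mul_pos hc2 hA0') (hlow2 t ht)
        (by norm_num : (-(1:ℝ)/3) ≤ 0)
      rwa [Real.mul_rpow hc2.le (by linarith)] at h
    set KK : ℝ := Kb * M * Real.exp (-ε * x) * (1 + A) ^ β *
      ((c/2) ^ (-(1:ℝ)/3) * (1 + A) ^ (-(1:ℝ)/3)) * Real.exp (b0 * x) with hKK_def
    have hKKnn : 0 ≤ KK := by
      rw [hKK_def]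
      have h1 : (0:ℝ) ≤ (1 + A) ^ β := Real.rpow_nonneg (by linarith) _
      have h2 : (0:ℝ) ≤ (1 + A) ^ (-(1:ℝ)/3) := Real.rpow_nonneg (by linarith) _
      have h3 : (0:ℝ) ≤ (c/2) ^ (-(1:ℝ)/3) := hr1.le
      positivity
    have hgint : MeasureTheory.IntegrableOn (fun t : ℝ => KK * Real.exp (-(b0 * t)))
        (Set.Ici x) := (aux_int_exp_integrable b0 x hb0).const_mul KK
    have hbound : (fun t : ℝ =>
        Real.exp (-ε * t) * (1 + ‖(t:ℂ) + (y:ℂ) * Complex.I‖) ^ β *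
          ‖(t:ℂ) + (y:ℂ) * Complex.I‖ ^ (-(1:ℝ)/3))
        ≤ᵐ[MeasureTheory.volume.restrict (Set.Ici x)]
        fun t : ℝ => KK * Real.exp (-(b0 * t)) := by
      filter_upwards [MeasureTheory.ae_restrict_mem measurableSet_Ici] with t ht
      have hsplit : Real.exp (-(b0 * (t - x))) = Real.exp (b0 * x) * Real.exp (-(b0 * t)) := by
        rw [← Real.exp_add]; congr 1; ring
      have hKnn : (0:ℝ) ≤ Kb * M * Real.exp (-ε * x) * (1 + A) ^ β :=
        mul_nonneg (mul_nonneg (mul_nonneg hKb0.le hM0.le) (Real.exp_pos _).le)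
          (Real.rpow_nonneg (by linarith) _)
      calc Real.exp (-ε * t) * (1 + ‖(t:ℂ) + (y:ℂ) * Complex.I‖) ^ β *
            ‖(t:ℂ) + (y:ℂ) * Complex.I‖ ^ (-(1:ℝ)/3)
          ≤ (Kb * M * Real.exp (-ε * x) * (1 + A) ^ β) *
              (Real.exp (-(b0 * (t - x))) *
                ‖(t:ℂ) + (y:ℂ) * Complex.I‖ ^ (-(1:ℝ)/3)) := hMaster t ht
        _ ≤ (Kb * M * Real.exp (-ε * x) * (1 + A) ^ β) *
              (Real.exp (-(b0 * (t - x))) *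
                ((c/2) ^ (-(1:ℝ)/3) * (1 + A) ^ (-(1:ℝ)/3))) :=
            mul_le_mul_of_nonneg_left
              (mul_le_mul_of_nonneg_left (hAtr t ht) (Real.exp_pos _).le) hKnn
        _ = KK * Real.exp (-(b0 * t)) := by
            rw [hKK_def, hsplit]; ring
    have hstep := MeasureTheory.integral_mono_of_nonneg hnn hgint hbound
    rw [MeasureTheory.integral_const_mul, aux_int_exp b0 x hb0] at hstep
    refine le_trans hstep ?_
    have hcancel : Real.exp (b0 * x) * Real.exp (-(b0 * x)) = 1 := by
      rw [← Real.exp_add]; simp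
    have hpow : (1 + A) ^ β * (1 + A) ^ (-(1:ℝ)/3) = (1 + A) ^ e := by
      rw [← Real.rpow_add hA0']
      congr 1
      rw [hβ_def, he_def]; ring
    calc KK * (b0⁻¹ * Real.exp (-(b0 * x)))
        = (Kb * M * (c/2) ^ (-(1:ℝ)/3) * b0⁻¹) * Real.exp (-ε * x) *
            ((1 + A) ^ β * (1 + A) ^ (-(1:ℝ)/3)) *
            (Real.exp (b0 * x) * Real.exp (-(b0 * x))) := by
          rw [hKK_def]; ring
      _ = K1 * Real.exp (-ε * x) * (1 + A) ^ e := by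
          rw [hcancel, hpow, hK1_def]; ring
      _ ≤ (1 + K1 + K2) * Real.exp (-ε * x) * (1 + A) ^ e := by
          nlinarith [mul_nonneg (mul_nonneg (show (0:ℝ) ≤ 1 + K2 by linarith)
            (Real.exp_pos (-ε * x)).le) (Real.rpow_nonneg hA0'.le e)]
  · -- |w| < 1
    have hx1 : |x| ≤ A := by rw [hA_def, hw_def]; exact aux_abs_re x y
    have hxle1 : x ≤ 1 := le_trans (le_abs_self x) (by linarith)
    have hxge : (-1:ℝ) ≤ x := by nlinarith [neg_abs_le x]
    have hP2 : (1 + A) ^ β ≤ 2 ^ bb := by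
      rcases le_or_gt 0 β with hβ | hβ
      · have h1 : (1 + A) ^ β ≤ 2 ^ β :=
          Real.rpow_le_rpow (by linarith) (by linarith) hβ
        rwa [hbb_def, max_eq_left hβ]
      · have h1 : (1 + A) ^ β ≤ 1 :=
          Real.rpow_le_one_of_one_le_of_nonpos (by linarith) hβ.le
        rw [hbb_def, max_eq_right hβ.le, Real.rpow_zero]
        exact h1
    set KK2 : ℝ := Kb * M * Real.exp (-ε * x) * 2 ^ bb * Real.exp b0 with hKK2_def
    have hKK2nn : 0 ≤ KK2 := by
      rw [hKK2_def]
      have := h2bb.le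
      positivity
    have hphiint : MeasureTheory.IntegrableOn
        (fun t : ℝ => Real.exp (-(b0 * t)) * |t| ^ (-(1:ℝ)/3)) (Set.Ici x) :=
      (aux_phi_integrable b0 hb0).mono_set (Set.Ici_subset_Ici.2 hxge)
    have hgint : MeasureTheory.IntegrableOn
        (fun t : ℝ => KK2 * (Real.exp (-(b0 * t)) * |t| ^ (-(1:ℝ)/3))) (Set.Ici x) :=
      hphiint.const_mul KK2
    have h0ae : ∀ᵐ t ∂(MeasureTheory.volume.restrict (Set.Ici x)), t ≠ 0 := by
      apply MeasureTheory.ae_restrict_of_ae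
      rw [MeasureTheory.ae_iff]
      simp only [ne_eq, not_not, Set.setOf_eq_eq_singleton]
      exact Real.volume_singleton
    have hbound : (fun t : ℝ =>
        Real.exp (-ε * t) * (1 + ‖(t:ℂ) + (y:ℂ) * Complex.I‖) ^ β *
          ‖(t:ℂ) + (y:ℂ) * Complex.I‖ ^ (-(1:ℝ)/3))
        ≤ᵐ[MeasureTheory.volume.restrict (Set.Ici x)]
        fun t : ℝ => KK2 * (Real.exp (-(b0 * t)) * |t| ^ (-(1:ℝ)/3)) := by
      filter_upwards [MeasureTheory.ae_restrict_mem measurableSet_Ici, h0ae] with t ht ht0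
      have hAtpos : (0:ℝ) < |t| := abs_pos.2 ht0
      have hAtr : ‖(t:ℂ) + (y:ℂ) * Complex.I‖ ^ (-(1:ℝ)/3) ≤ |t| ^ (-(1:ℝ)/3) :=
        Real.rpow_le_rpow_of_nonpos hAtpos (aux_abs_re t y) (by norm_num)
      have hExp : Real.exp (-(b0 * (t - x))) ≤ Real.exp b0 * Real.exp (-(b0 * t)) := by
        rw [← Real.exp_add]
        apply Real.exp_le_exp.2
        nlinarith [hb0, hxle1]
      have hKnn : (0:ℝ) ≤ Kb * M * Real.exp (-ε * x) :=
        mul_nonneg (mul_nonneg hKb0.le hM0.le) (Real.exp_pos _).le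
      calc Real.exp (-ε * t) * (1 + ‖(t:ℂ) + (y:ℂ) * Complex.I‖) ^ β *
            ‖(t:ℂ) + (y:ℂ) * Complex.I‖ ^ (-(1:ℝ)/3)
          ≤ (Kb * M * Real.exp (-ε * x) * (1 + A) ^ β) *
              (Real.exp (-(b0 * (t - x))) *
                ‖(t:ℂ) + (y:ℂ) * Complex.I‖ ^ (-(1:ℝ)/3)) := hMaster t ht
        _ ≤ (Kb * M * Real.exp (-ε * x) * 2 ^ bb) *
              ((Real.exp b0 * Real.exp (-(b0 * t))) * |t| ^ (-(1:ℝ)/3)) := by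
            apply mul_le_mul
            · exact mul_le_mul_of_nonneg_left hP2 hKnn
            · exact mul_le_mul hExp hAtr (hr0 t) (by positivity)
            · exact mul_nonneg (Real.exp_pos _).le (hr0 t)
            · exact mul_nonneg hKnn h2bb.le
        _ = KK2 * (Real.exp (-(b0 * t)) * |t| ^ (-(1:ℝ)/3)) := by
            rw [hKK2_def]; ring
    have hstep := MeasureTheory.integral_mono_of_nonneg hnn hgint hbound
    rw [MeasureTheory.integral_const_mul] at hstep
    refine le_trans hstep ?_
    have hmono : (∫ t in Set.Ici x, Real.exp (-(b0 * t)) * |t| ^ (-(1:ℝ)/3)) ≤ C3 := by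
      rw [hC3_def]
      apply MeasureTheory.setIntegral_mono_set (aux_phi_integrable b0 hb0)
        (Filter.Eventually.of_forall fun t =>
          mul_nonneg (Real.exp_pos _).le (Real.rpow_nonneg (abs_nonneg t) _))
        ((Set.Ici_subset_Ici.2 hxge).eventuallyLE)
    have hPe : (2:ℝ) ^ (-|e|) ≤ (1 + A) ^ e := by
      rcases le_or_gt 0 e with he0 | he0
      · have h1 : (2:ℝ) ^ (-|e|) ≤ 1 :=
          Real.rpow_le_one_of_one_le_of_nonpos (by norm_num) (neg_nonpos.2 (abs_nonneg _))
        have h2 : (1:ℝ) ≤ (1 + A) ^ e := by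
          have h3 := Real.rpow_le_rpow (by norm_num : (0:ℝ) ≤ 1) (by linarith : (1:ℝ) ≤ 1 + A) he0
          rwa [Real.one_rpow] at h3
        linarith
      · rw [_root_.abs_of_neg he0, neg_neg]
        exact Real.rpow_le_rpow_of_nonpos hA0' (by linarith) he0.le
    have hfold : Kb * M * 2 ^ bb * Real.exp b0 * C3 = K2 * (2:ℝ) ^ (-|e|) := by
      rw [hK2_def, Real.rpow_neg (by norm_num : (0:ℝ) ≤ 2)]
      field_simp
    calc KK2 * ∫ t in Set.Ici x, Real.exp (-(b0 * t)) * |t| ^ (-(1:ℝ)/3)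
        ≤ KK2 * C3 := mul_le_mul_of_nonneg_left hmono hKK2nn
      _ = (Kb * M * 2 ^ bb * Real.exp b0 * C3) * Real.exp (-ε * x) := by
          rw [hKK2_def]; ring
      _ = (K2 * (2:ℝ) ^ (-|e|)) * Real.exp (-ε * x) := by rw [hfold]
      _ ≤ (K2 * (1 + A) ^ e) * Real.exp (-ε * x) :=
          mul_le_mul_of_nonneg_right (mul_le_mul_of_nonneg_left hPe hK2)
            (Real.exp_pos _).le
      _ ≤ (1 + K1 + K2) * Real.exp (-ε * x) * (1 + A) ^ e := by
          nlinarith [mul_nonneg (mul_nonneg (show (0:ℝ) ≤ 1 + K1 by linarith)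
            (Real.exp_pos (-ε * x)).le) (Real.rpow_nonneg hA0'.le e)]
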